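/- Let μ > 0, θ > 0 and λ > 0. Define M₁(x) = (λ/(θ+λ))·e^{−(θ+λ)x/μ} + θ/(θ+λ) and M₂(x) = (λ(λ+2θ)/(θ+λ)²)·e^{−(θ+λ)x/μ} + (θλ/(μ(θ+λ)))·x·e^{−(θ+λ)(x−1)/μ} + θ²/(θ+λ)². Then for every x ∈ ℝ, μ·M₂'(x) + (θ+λ)·M₂(x) = θ·M₁(x−1). -/

import Mathlib

/-- For the Poisson process with drift, the Laplace transform of the first-passage time
on `(1,2]`, `M₂`, satisfies `μM₂'(x) + (θ+λ)M₂(x) = θ M₁(x-1)`, where `M₁` is the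
Laplace transform on `(0,1]`. -/
theorem stmt_17 (μ θ lam : ℝ) (hμ : 0 < μ) (hθ : 0 < θ) (hlam : 0 < lam)
    (M₁ M₂ : ℝ → ℝ)
    (hM₁ : ∀ x : ℝ, M₁ x = (lam / (θ + lam)) * Real.exp (-(θ + lam) * x / μ) + θ / (θ + lam))
    (hM₂ : ∀ x : ℝ, M₂ x = (lam * (lam + 2 * θ) / (θ + lam) ^ 2) * Real.exp (-(θ + lam) * x / μ)
      + (θ * lam / (μ * (θ + lam))) * x * Real.exp (-(θ + lam) * (x - 1) / μ)
      + θ ^ 2 / (θ + lam) ^ 2) :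
    ∀ x : ℝ, μ * deriv M₂ x + (θ + lam) * M₂ x = θ * M₁ (x - 1) := by
  intro x
  have hMf : M₂ = fun x => (lam * (lam + 2 * θ) / (θ + lam) ^ 2) * Real.exp (-(θ + lam) * x / μ)
      + (θ * lam / (μ * (θ + lam))) * x * Real.exp (-(θ + lam) * (x - 1) / μ)
      + θ ^ 2 / (θ + lam) ^ 2 := funext hM₂
  have ha : HasDerivAt (fun x : ℝ => -(θ + lam) * x / μ) (-(θ + lam) / μ) x := by
    simpa using ((hasDerivAt_id x).const_mul (-(θ + lam))).div_const μ
  have hb : HasDerivAt (fun x : ℝ => -(θ + lam) * (x - 1) / μ) (-(θ + lam) / μ) x := by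
    simpa using (((hasDerivAt_id x).sub_const 1).const_mul (-(θ + lam))).div_const μ
  have h1 : HasDerivAt (fun x : ℝ => (lam * (lam + 2 * θ) / (θ + lam) ^ 2) *
      Real.exp (-(θ + lam) * x / μ))
      ((lam * (lam + 2 * θ) / (θ + lam) ^ 2) * (-(θ + lam) / μ * Real.exp (-(θ + lam) * x / μ)))
      x := by simpa [mul_comm] using (ha.exp).const_mul (lam * (lam + 2 * θ) / (θ + lam) ^ 2)
  have h2 : HasDerivAt (fun x : ℝ => (θ * lam / (μ * (θ + lam))) * x *
      Real.exp (-(θ + lam) * (x - 1) / μ))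
      ((θ * lam / (μ * (θ + lam))) * Real.exp (-(θ + lam) * (x - 1) / μ)
        + (θ * lam / (μ * (θ + lam))) * x *
          (-(θ + lam) / μ * Real.exp (-(θ + lam) * (x - 1) / μ))) x := by
    simpa [mul_comm, Pi.mul_def] using (((hasDerivAt_id x).const_mul (θ * lam / (μ * (θ + lam)))).mul (hb.exp))
  have hD : HasDerivAt M₂
      ((lam * (lam + 2 * θ) / (θ + lam) ^ 2) * (-(θ + lam) / μ * Real.exp (-(θ + lam) * x / μ))
        + ((θ * lam / (μ * (θ + lam))) * Real.exp (-(θ + lam) * (x - 1) / μ)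
          + (θ * lam / (μ * (θ + lam))) * x *
            (-(θ + lam) / μ * Real.exp (-(θ + lam) * (x - 1) / μ)))) x := by
    rw [hMf]
    exact (h1.add h2).add_const _
  rw [hD.deriv, hM₂, hM₁]
  have hs : θ + lam ≠ 0 := by positivity
  have h2' : -(θ + lam) * (x - 1) / μ = -(θ + lam) * x / μ + (θ + lam) / μ := by ring
  rw [h2', Real.exp_add]
  field_simp
  ring
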